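/- Let d ≥ 2 be an integer, k ∈ {0, −1}, and 0 < z₁ < z₂. Let f, χ : [z₁, z₂] → ℝ be twice continuously differentiable and let w : [z₁, z₂] → ℝ satisfy w(z) ≥ 0 for all z. Define F(z) = (1/2) z^{1−d} e^{χ(z)/2} · (f e^{−χ})'(z). Suppose F'(z) = z^{−1−d} e^{−χ(z)/2} [w(z) − (d−2) k z²] for all z ∈ (z₁, z₂). Then it is impossible that simultaneously f(z₁) = f(z₂) = 0, f(z) > 0 for all z ∈ (z₁, z₂), f'(z₁) ≠ 0, and f'(z₂) ≠ 0. -/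

import Mathlib

lemma left_endpoint_deriv_nonneg {z₁ z₂ a : ℝ} (hz : z₁ < z₂) {f : ℝ → ℝ}
    (hd : HasDerivWithinAt f a (Set.Icc z₁ z₂) z₁) (h0 : f z₁ = 0)
    (hpos : ∀ z ∈ Set.Icc z₁ z₂, 0 ≤ f z) : 0 ≤ a := by
  rw [hasDerivWithinAt_iff_tendsto_slope, Set.Icc_diff_left] at hd
  haveI := left_nhdsWithin_Ioc_neBot hz
  refine ge_of_tendsto hd ?_
  filter_upwards [self_mem_nhdsWithin] with x hx
  rw [slope_def_field, div_eq_mul_inv]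
  have : 0 < x - z₁ := sub_pos.2 hx.1
  have hfx : 0 ≤ f x := hpos x ⟨le_of_lt hx.1, hx.2⟩
  rw [h0, sub_zero]
  positivity

lemma right_endpoint_deriv_nonpos {z₁ z₂ a : ℝ} (hz : z₁ < z₂) {f : ℝ → ℝ}
    (hd : HasDerivWithinAt f a (Set.Icc z₁ z₂) z₂) (h0 : f z₂ = 0)
    (hpos : ∀ z ∈ Set.Icc z₁ z₂, 0 ≤ f z) : a ≤ 0 := by
  rw [hasDerivWithinAt_iff_tendsto_slope, Set.Icc_sdiff_right] at hd
  haveI := right_nhdsWithin_Ico_neBot hz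
  refine le_of_tendsto hd ?_
  filter_upwards [self_mem_nhdsWithin] with x hx
  rw [slope_def_field, h0, sub_zero]
  have hxz : x - z₂ < 0 := sub_neg.2 hx.2
  have hfx : 0 ≤ f x := hpos x ⟨hx.1, le_of_lt hx.2⟩
  exact div_nonpos_of_nonneg_of_nonpos hfx (le_of_lt hxz)

/-- condition C2 (planar `k = 0` or hyperbolic `k = −1` topology,
non-degenerate horizons). With `F z = (1/2) z^(1−d) e^(χ/2) (f e^(−χ))'` and
`F' = z^(−1−d) e^(−χ/2) [w − (d−2) k z²]` on `(z₁, z₂)` for some `w ≥ 0`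
(the null energy condition), it is impossible that `f` has simple zeros at
`z₁` and `z₂` and is positive in between. -/
theorem no_two_nondegenerate_inner_horizons_C2
    (d : ℕ) (hd : 2 ≤ d)
    (k : ℝ) (hk : k = 0 ∨ k = -1)
    (z₁ z₂ : ℝ) (hz₁ : 0 < z₁) (hz : z₁ < z₂)
    (f χ : ℝ → ℝ)
    (hf : ContDiffOn ℝ 2 f (Set.Icc z₁ z₂))
    (hχ : ContDiffOn ℝ 2 χ (Set.Icc z₁ z₂))
    (w : ℝ → ℝ) (hw : ∀ z ∈ Set.Icc z₁ z₂, 0 ≤ w z)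
    (F : ℝ → ℝ)
    (hF : ∀ z, F z = (1 / 2) * z ^ (1 - (d : ℤ)) * Real.exp (χ z / 2) *
        derivWithin (fun s => f s * Real.exp (-(χ s))) (Set.Icc z₁ z₂) z)
    (hF' : ∀ z ∈ Set.Ioo z₁ z₂,
        HasDerivAt F
          (z ^ (-1 - (d : ℤ)) * Real.exp (-(χ z) / 2) *
            (w z - ((d : ℝ) - 2) * k * z ^ 2)) z) :
    ¬ (f z₁ = 0 ∧ f z₂ = 0 ∧ (∀ z ∈ Set.Ioo z₁ z₂, 0 < f z) ∧
        derivWithin f (Set.Icc z₁ z₂) z₁ ≠ 0 ∧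
        derivWithin f (Set.Icc z₁ z₂) z₂ ≠ 0) := by
  rintro ⟨h1, h2, h3, h4, h5⟩
  set s : Set ℝ := Set.Icc z₁ z₂ with hs_def
  have hs : UniqueDiffOn ℝ s := uniqueDiffOn_Icc hz
  have hz₁s : z₁ ∈ s := Set.left_mem_Icc.2 (le_of_lt hz)
  have hz₂s : z₂ ∈ s := Set.right_mem_Icc.2 (le_of_lt hz)
  -- f is nonnegative on s
  have hfnn : ∀ z ∈ s, 0 ≤ f z := by
    rintro z ⟨hza, hzb⟩
    rcases eq_or_lt_of_le hza with rfl | hza'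
    · exact le_of_eq h1.symm
    rcases eq_or_lt_of_le hzb with rfl | hzb'
    · exact le_of_eq h2.symm
    · exact le_of_lt (h3 z ⟨hza', hzb'⟩)
  have hfd : DifferentiableOn ℝ f s := hf.differentiableOn two_ne_zero
  have hE : ContDiffOn ℝ 2 (fun z => Real.exp (-(χ z))) s := hχ.neg.exp
  have hEd : DifferentiableOn ℝ (fun z => Real.exp (-(χ z))) s :=
    hE.differentiableOn two_ne_zero
  have hg : ContDiffOn ℝ 2 (fun z => f z * Real.exp (-(χ z))) s := hf.mul hE
  -- endpoint derivatives of f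
  have hf'₁ : 0 < derivWithin f s z₁ := by
    have h0 := left_endpoint_deriv_nonneg hz ((hfd z₁ hz₁s).hasDerivWithinAt) h1 hfnn
    exact lt_of_le_of_ne h0 (Ne.symm h4)
  have hf'₂ : derivWithin f s z₂ < 0 := by
    have h0 := right_endpoint_deriv_nonpos hz ((hfd z₂ hz₂s).hasDerivWithinAt) h2 hfnn
    exact lt_of_le_of_ne h0 h5
  -- derivWithin of the product at the endpoints
  have hprod : ∀ z ∈ s, f z = 0 →
      derivWithin (fun t => f t * Real.exp (-(χ t))) s z
        = derivWithin f s z * Real.exp (-(χ z)) := by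
    intro z hzs hfz
    rw [derivWithin_fun_mul (hfd z hzs) (hEd z hzs), hfz, zero_mul, add_zero]
  -- F is positive at z₁ and negative at z₂
  have hF₁ : 0 < F z₁ := by
    rw [hF z₁, hprod z₁ hz₁s h1]
    have : (0:ℝ) < z₁ ^ (1 - (d:ℤ)) := zpow_pos hz₁ _
    positivity
  have hF₂ : F z₂ < 0 := by
    rw [hF z₂, hprod z₂ hz₂s h2]
    have h2pos : (0:ℝ) < z₂ ^ (1 - (d:ℤ)) := zpow_pos (lt_trans hz₁ hz) _
    have hA : (0:ℝ) < 1 / 2 * z₂ ^ (1 - (d:ℤ)) * Real.exp (χ z₂ / 2) := by positivity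
    have hB : derivWithin f s z₂ * Real.exp (-(χ z₂)) < 0 :=
      mul_neg_of_neg_of_pos hf'₂ (Real.exp_pos _)
    exact mul_neg_of_pos_of_neg hA hB
  -- F is monotone on s
  have hFcont : ContinuousOn F s := by
    have hder : ContinuousOn (derivWithin (fun t => f t * Real.exp (-(χ t))) s) s :=
      (hg.derivWithin (m := 1) hs (by norm_num)).continuousOn
    have hzp : ContinuousOn (fun z : ℝ => z ^ (1 - (d:ℤ))) s :=
      continuousOn_id.zpow₀ _ (fun z hzs => Or.inl (ne_of_gt (lt_of_lt_of_le hz₁ hzs.1)))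
    have : ContinuousOn (fun z => (1 / 2) * z ^ (1 - (d : ℤ)) * Real.exp (χ z / 2) *
        derivWithin (fun t => f t * Real.exp (-(χ t))) s z) s :=
      (((continuousOn_const.mul hzp).mul
        ((hχ.continuousOn.div_const 2).rexp)).mul hder)
    exact this.congr (fun z _ => hF z)
  have hmono : MonotoneOn F s := by
    refine monotoneOn_of_hasDerivWithinAt_nonneg (convex_Icc z₁ z₂) hFcont
      (f' := fun z => z ^ (-1 - (d : ℤ)) * Real.exp (-(χ z) / 2) *
        (w z - ((d : ℝ) - 2) * k * z ^ 2)) ?_ ?_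
    · intro x hx
      rw [interior_Icc] at hx
      exact ((hF' x hx).hasDerivWithinAt)
    · intro x hx
      rw [interior_Icc] at hx
      have hxpos : 0 < x := lt_trans hz₁ hx.1
      have hxz : (0:ℝ) < x ^ (-1 - (d:ℤ)) := zpow_pos hxpos _
      have hwx : 0 ≤ w x := hw x ⟨le_of_lt hx.1, le_of_lt hx.2⟩
      have hkx : ((d : ℝ) - 2) * k * x ^ 2 ≤ 0 := by
        have hd2 : (0:ℝ) ≤ (d:ℝ) - 2 := by
          have : (2:ℝ) ≤ (d:ℝ) := by exact_mod_cast hd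
          linarith
        rcases hk with rfl | rfl
        · simp
        · nlinarith
      have : 0 ≤ w x - ((d : ℝ) - 2) * k * x ^ 2 := by linarith
      positivity
  have := hmono hz₁s hz₂s (le_of_lt hz)
  linarith
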